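/- If K is a projectively coresolved Gorenstein flat right R-module, then K is a direct summand of a module M fitting into an exact sequence 0 → M → P → M → 0 with P projective and satisfying Tor₁ᴿ(M, I) = 0 for every injective left R-module I. -/

import Mathlib

open Function LinearMap DirectSum

section Prelim
variable (R : Type) [Ring R]

def Ext1Zero (A B : Type) [AddCommGroup A] [Module R A] [AddCommGroup B] [Module R B] : Prop :=
  ∀ (E : Type) [AddCommGroup E] [Module R E] (i : B →ₗ[R] E) (p : E →ₗ[R] A),
    Function.Injective i → Function.Surjective p → LinearMap.range i = LinearMap.ker p →
    ∃ s : A →ₗ[R] E, p ∘ₗ s = LinearMap.id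

inductive TensorRelGen (M : Type) [AddCommGroup M] [Module Rᵐᵒᵖ M]
    (I : Type) [AddCommGroup I] [Module R I] : FreeAbelianGroup (M × I) → Prop
  | addLeft (m m' : M) (i : I) : TensorRelGen M I
      (FreeAbelianGroup.of (m + m', i) - FreeAbelianGroup.of (m, i) - FreeAbelianGroup.of (m', i))
  | addRight (m : M) (i i' : I) : TensorRelGen M I
      (FreeAbelianGroup.of (m, i + i') - FreeAbelianGroup.of (m, i) - FreeAbelianGroup.of (m, i'))
  | smul (r : R) (m : M) (i : I) : TensorRelGen M I
      (FreeAbelianGroup.of (MulOpposite.op r • m, i) - FreeAbelianGroup.of (m, r • i))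

def tensorRels (M : Type) [AddCommGroup M] [Module Rᵐᵒᵖ M]
    (I : Type) [AddCommGroup I] [Module R I] : AddSubgroup (FreeAbelianGroup (M × I)) :=
  AddSubgroup.closure {x | TensorRelGen R M I x}

/-- The tensor product `M ⊗_R I` of a right `R`-module and a left `R`-module. -/
abbrev Tensor (M : Type) [AddCommGroup M] [Module Rᵐᵒᵖ M]
    (I : Type) [AddCommGroup I] [Module R I] : Type :=
  FreeAbelianGroup (M × I) ⧸ tensorRels R M I

variable {M N : Type} [AddCommGroup M] [Module Rᵐᵒᵖ M] [AddCommGroup N] [Module Rᵐᵒᵖ N]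
variable {I J : Type} [AddCommGroup I] [Module R I] [AddCommGroup J] [Module R J]

private def tlAux (I : Type) [AddCommGroup I] [Module R I] (f : M →ₗ[Rᵐᵒᵖ] N) :
    FreeAbelianGroup (M × I) →+ Tensor R N I :=
  FreeAbelianGroup.lift fun p =>
    QuotientAddGroup.mk (FreeAbelianGroup.of (f p.1, p.2))

private theorem tlAux_rels (f : M →ₗ[Rᵐᵒᵖ] N) :
    tensorRels R M I ≤ (tlAux R I f).ker := by
  rw [tensorRels, AddSubgroup.closure_le]
  rintro x hx
  rcases hx with ⟨m, m', i⟩ | ⟨m, i, i'⟩ | ⟨r, m, i⟩ <;>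
    · rw [SetLike.mem_coe, AddMonoidHom.mem_ker, tlAux]
      simp only [map_sub, FreeAbelianGroup.lift_apply_of]
      simp only [← QuotientAddGroup.mk_sub]
      rw [QuotientAddGroup.eq_zero_iff]
      apply AddSubgroup.subset_closure
      first
        | exact (by simpa [map_add] using TensorRelGen.addLeft (R := R) (f m) (f m') i)
        | exact (by simpa using TensorRelGen.addRight (R := R) (f m) i i')
        | exact (by simpa [map_smul] using TensorRelGen.smul (R := R) r (f m) i)

/-- `f ⊗ id_I`. -/
def tensorLeftMap (I : Type) [AddCommGroup I] [Module R I] (f : M →ₗ[Rᵐᵒᵖ] N) :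
    Tensor R M I →+ Tensor R N I :=
  QuotientAddGroup.lift _ (tlAux R I f) (tlAux_rels R f)

private def trAux (M : Type) [AddCommGroup M] [Module Rᵐᵒᵖ M] (g : I →ₗ[R] J) :
    FreeAbelianGroup (M × I) →+ Tensor R M J :=
  FreeAbelianGroup.lift fun p =>
    QuotientAddGroup.mk (FreeAbelianGroup.of (p.1, g p.2))

private theorem trAux_rels (g : I →ₗ[R] J) :
    tensorRels R M I ≤ (trAux R M g).ker := by
  rw [tensorRels, AddSubgroup.closure_le]
  rintro x hx
  rcases hx with ⟨m, m', i⟩ | ⟨m, i, i'⟩ | ⟨r, m, i⟩ <;>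
    · rw [SetLike.mem_coe, AddMonoidHom.mem_ker, trAux]
      simp only [map_sub, FreeAbelianGroup.lift_apply_of]
      simp only [← QuotientAddGroup.mk_sub]
      rw [QuotientAddGroup.eq_zero_iff]
      apply AddSubgroup.subset_closure
      first
        | exact (by simpa using TensorRelGen.addLeft (R := R) m m' (g i))
        | exact (by simpa [map_add] using TensorRelGen.addRight (R := R) m (g i) (g i'))
        | exact (by simpa [map_smul] using TensorRelGen.smul (R := R) r m (g i))

/-- `id_M ⊗ g`. -/
def tensorRightMap (M : Type) [AddCommGroup M] [Module Rᵐᵒᵖ M] (g : I →ₗ[R] J) :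
    Tensor R M I →+ Tensor R M J :=
  QuotientAddGroup.lift _ (trAux R M g) (trAux_rels R g)

/-- A right `R`-module `F` is flat if tensoring with it preserves injectivity of maps of
left `R`-modules. -/
def IsFlat (F : Type) [AddCommGroup F] [Module Rᵐᵒᵖ F] : Prop :=
  ∀ (I J : Type) [AddCommGroup I] [Module R I] [AddCommGroup J] [Module R J]
    (g : I →ₗ[R] J), Function.Injective g → Function.Injective (tensorRightMap R F g)

/-- A short exact sequence `0 → A → B → C → 0` of right `R`-modules. -/
def SES {A B C : Type} [AddCommGroup A] [Module Rᵐᵒᵖ A] [AddCommGroup B] [Module Rᵐᵒᵖ B]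
    [AddCommGroup C] [Module Rᵐᵒᵖ C] (f : A →ₗ[Rᵐᵒᵖ] B) (g : B →ₗ[Rᵐᵒᵖ] C) : Prop :=
  Function.Injective f ∧ Function.Surjective g ∧ LinearMap.range f = LinearMap.ker g

/-- `K` is a projectively coresolved Gorenstein flat right `R`-module: a syzygy (cocycle)
in an acyclic complex of projective modules which stays exact after tensoring with any
injective left `R`-module. -/
def IsPGF (K : Type) [AddCommGroup K] [Module Rᵐᵒᵖ K] : Prop :=
  ∃ (P : ℤ → ModuleCat.{0} Rᵐᵒᵖ) (d : ∀ n : ℤ, P n →ₗ[Rᵐᵒᵖ] P (n + 1)),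
    (∀ n, Module.Projective Rᵐᵒᵖ (P n)) ∧
    (∀ n, LinearMap.range (d n) = LinearMap.ker (d (n + 1))) ∧
    (∀ (I : Type) [AddCommGroup I] [Module R I], Module.Injective R I →
      ∀ n, AddMonoidHom.range (tensorLeftMap R I (d n)) =
        AddMonoidHom.ker (tensorLeftMap R I (d (n + 1)))) ∧
    Nonempty (K ≃ₗ[Rᵐᵒᵖ] LinearMap.ker (d 0))

/-- `K` is a Gorenstein flat right `R`-module: a syzygy in an acyclic complex of flat
modules which stays exact after tensoring with any injective left `R`-module. -/
def IsGF (K : Type) [AddCommGroup K] [Module Rᵐᵒᵖ K] : Prop :=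
  ∃ (P : ℤ → ModuleCat.{0} Rᵐᵒᵖ) (d : ∀ n : ℤ, P n →ₗ[Rᵐᵒᵖ] P (n + 1)),
    (∀ n, IsFlat R (P n)) ∧
    (∀ n, LinearMap.range (d n) = LinearMap.ker (d (n + 1))) ∧
    (∀ (I : Type) [AddCommGroup I] [Module R I], Module.Injective R I →
      ∀ n, AddMonoidHom.range (tensorLeftMap R I (d n)) =
        AddMonoidHom.ker (tensorLeftMap R I (d (n + 1)))) ∧
    Nonempty (K ≃ₗ[Rᵐᵒᵖ] LinearMap.ker (d 0))

/-- `K` is a Gorenstein projective right `R`-module. -/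
def IsGorensteinProjective (K : Type) [AddCommGroup K] [Module Rᵐᵒᵖ K] : Prop :=
  ∃ (P : ℤ → ModuleCat.{0} Rᵐᵒᵖ) (d : ∀ n : ℤ, P n →ₗ[Rᵐᵒᵖ] P (n + 1)),
    (∀ n, Module.Projective Rᵐᵒᵖ (P n)) ∧
    (∀ n, LinearMap.range (d n) = LinearMap.ker (d (n + 1))) ∧
    (∀ (Q : Type) [AddCommGroup Q] [Module Rᵐᵒᵖ Q], Module.Projective Rᵐᵒᵖ Q →
      ∀ (n : ℤ) (h : P (n + 1) →ₗ[Rᵐᵒᵖ] Q), h ∘ₗ d n = 0 →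
        ∃ k : P (n + 1 + 1) →ₗ[Rᵐᵒᵖ] Q, k ∘ₗ d (n + 1) = h) ∧
    Nonempty (K ≃ₗ[Rᵐᵒᵖ] LinearMap.ker (d 0))

/-- A cotorsion right `R`-module: `Ext¹(F, C) = 0` for every flat `F`. -/
def IsCotorsion (C : Type) [AddCommGroup C] [Module Rᵐᵒᵖ C] : Prop :=
  ∀ (F : Type) [AddCommGroup F] [Module Rᵐᵒᵖ F], IsFlat R F → Ext1Zero Rᵐᵒᵖ F C

/-- A pure submodule: the inclusion stays injective after tensoring with any left module. -/
def IsPureSubmodule {M : Type} [AddCommGroup M] [Module Rᵐᵒᵖ M] (P : Submodule Rᵐᵒᵖ M) : Prop :=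
  ∀ (I : Type) [AddCommGroup I] [Module R I],
    Function.Injective (tensorLeftMap R I P.subtype)

/-- A pure epimorphism of right `R`-modules. -/
def IsPureEpi {P M : Type} [AddCommGroup P] [Module Rᵐᵒᵖ P] [AddCommGroup M] [Module Rᵐᵒᵖ M]
    (g : P →ₗ[Rᵐᵒᵖ] M) : Prop :=
  Function.Surjective g ∧ IsPureSubmodule R (LinearMap.ker g)

/-- A Mittag-Leffler right `R`-module. -/
def IsMittagLeffler (M : Type) [AddCommGroup M] [Module Rᵐᵒᵖ M] : Prop :=
  ∀ (ι : Type) (Q : ι → Type) [∀ i, AddCommGroup (Q i)] [∀ i, Module R (Q i)],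
    Function.Injective (fun (x : Tensor R M (∀ i, Q i)) (i : ι) =>
      tensorRightMap R M (LinearMap.proj i) x)

end Prelim
section Aux

variable {R : Type} [Ring R]
variable {M N L : Type} [AddCommGroup M] [Module Rᵐᵒᵖ M] [AddCommGroup N] [Module Rᵐᵒᵖ N]
  [AddCommGroup L] [Module Rᵐᵒᵖ L]
variable {I : Type} [AddCommGroup I] [Module R I]

lemma tensorLeftMap_mk_of (f : M →ₗ[Rᵐᵒᵖ] N) (m : M) (i : I) :
    tensorLeftMap R I f (QuotientAddGroup.mk (FreeAbelianGroup.of (m, i))) =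
      QuotientAddGroup.mk (FreeAbelianGroup.of (f m, i)) := by
  simp [tensorLeftMap, tlAux]

lemma tensor_hom_ext {H : Type} [AddCommGroup H] {φ ψ : Tensor R M I →+ H}
    (h : ∀ (m : M) (i : I), φ (QuotientAddGroup.mk (FreeAbelianGroup.of (m, i))) =
      ψ (QuotientAddGroup.mk (FreeAbelianGroup.of (m, i)))) : φ = ψ := by
  ext x
  exact h x.1 x.2

lemma tensorLeftMap_id :
    tensorLeftMap R I (LinearMap.id : M →ₗ[Rᵐᵒᵖ] M) = AddMonoidHom.id _ :=
  tensor_hom_ext fun m i => by rw [tensorLeftMap_mk_of]; rfl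

lemma tensorLeftMap_comp (g : N →ₗ[Rᵐᵒᵖ] L) (f : M →ₗ[Rᵐᵒᵖ] N) :
    tensorLeftMap R I (g ∘ₗ f) = (tensorLeftMap R I g).comp (tensorLeftMap R I f) :=
  tensor_hom_ext fun m i => by
    simp [tensorLeftMap_mk_of]

lemma tensorLeftMap_zero :
    tensorLeftMap R I (0 : M →ₗ[Rᵐᵒᵖ] N) = 0 :=
  tensor_hom_ext fun m i => by
    rw [tensorLeftMap_mk_of]
    show _ = (0 : Tensor R N I)
    rw [QuotientAddGroup.eq_zero_iff]
    have h := AddSubgroup.subset_closure (G := FreeAbelianGroup (N × I))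
      (k := {x | TensorRelGen R N I x}) (TensorRelGen.addLeft (0 : N) 0 i)
    simpa [tensorRels] using (neg_mem h : _)

lemma tensorLeftMap_add (f g : M →ₗ[Rᵐᵒᵖ] N) :
    tensorLeftMap R I (f + g) = tensorLeftMap R I f + tensorLeftMap R I g :=
  tensor_hom_ext fun m i => by
    rw [tensorLeftMap_mk_of]
    show _ = tensorLeftMap R I f _ + tensorLeftMap R I g _
    rw [tensorLeftMap_mk_of, tensorLeftMap_mk_of]
    show _ = QuotientAddGroup.mk _
    rw [QuotientAddGroup.eq_iff_sub_mem]
    have h := AddSubgroup.subset_closure (G := FreeAbelianGroup (N × I))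
      (k := {x | TensorRelGen R N I x}) (TensorRelGen.addLeft (f m) (g m) i)
    simpa [tensorRels, sub_sub] using h

lemma tensorLeftMap_sum {ι : Type} (s : Finset ι) (f : ι → (M →ₗ[Rᵐᵒᵖ] N)) :
    tensorLeftMap R I (∑ n ∈ s, f n) = ∑ n ∈ s, tensorLeftMap R I (f n) := by
  classical
  induction s using Finset.induction_on with
  | empty => simpa using tensorLeftMap_zero
  | insert _ _ hn ih =>
    rw [Finset.sum_insert hn, Finset.sum_insert hn, tensorLeftMap_add, ih]

lemma tensorLeftMap_surjective {f : M →ₗ[Rᵐᵒᵖ] N} (hf : Function.Surjective f) :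
    Function.Surjective (tensorLeftMap R I f) := by
  intro y
  induction y using QuotientAddGroup.induction_on with
  | H w =>
    induction w using FreeAbelianGroup.induction_on with
    | zero => exact ⟨0, map_zero _⟩
    | of p =>
      obtain ⟨m, hm⟩ := hf p.1
      exact ⟨QuotientAddGroup.mk (FreeAbelianGroup.of (m, p.2)), by
        rw [tensorLeftMap_mk_of, hm]⟩
    | neg p hp =>
      obtain ⟨x, hx⟩ := hp
      exact ⟨-x, by rw [map_neg, hx]; rfl⟩
    | add a b ha hb =>
      obtain ⟨x, hx⟩ := ha
      obtain ⟨y, hy⟩ := hb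
      exact ⟨x + y, by rw [map_add, hx, hy]; rfl⟩

/-- The key homological lemma: if `A → B → C → D` is exact at `B` and `C`, and the
tensored complex is exact at `B ⊗ I`, then `(ker dCD) ⊗ I → C ⊗ I` is injective. -/
lemma ker_subtype_tensor_injective
    {A B C D : Type} [AddCommGroup A] [Module Rᵐᵒᵖ A] [AddCommGroup B] [Module Rᵐᵒᵖ B]
    [AddCommGroup C] [Module Rᵐᵒᵖ C] [AddCommGroup D] [Module Rᵐᵒᵖ D]
    (dAB : A →ₗ[Rᵐᵒᵖ] B) (dBC : B →ₗ[Rᵐᵒᵖ] C) (dCD : C →ₗ[Rᵐᵒᵖ] D)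
    (h1 : LinearMap.range dAB = LinearMap.ker dBC)
    (h2 : LinearMap.range dBC = LinearMap.ker dCD)
    (hT : AddMonoidHom.range (tensorLeftMap R I dAB) =
      AddMonoidHom.ker (tensorLeftMap R I dBC)) :
    Function.Injective (tensorLeftMap R I (LinearMap.ker dCD).subtype) := by
  set Kc := LinearMap.ker dCD
  have hmem : ∀ b, dBC b ∈ Kc := fun b => h2 ▸ LinearMap.mem_range_self dBC b
  set c : B →ₗ[Rᵐᵒᵖ] Kc := LinearMap.codRestrict Kc dBC hmem with hc
  have hcsurj : Function.Surjective c := by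
    rintro ⟨k, hk⟩
    rw [← h2] at hk
    obtain ⟨b, hb⟩ := hk
    exact ⟨b, Subtype.ext hb⟩
  have hfac : Kc.subtype ∘ₗ c = dBC := rfl
  have hzero : c ∘ₗ dAB = 0 := by
    ext a
    show dBC (dAB a) = 0
    have : dAB a ∈ LinearMap.ker dBC := h1 ▸ LinearMap.mem_range_self dAB a
    exact this
  rw [injective_iff_map_eq_zero]
  intro x hx
  obtain ⟨y, rfl⟩ := tensorLeftMap_surjective (I := I) hcsurj x
  have hy : tensorLeftMap R I dBC y = 0 := by
    rw [← hfac, tensorLeftMap_comp]; exact hx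
  have : y ∈ AddMonoidHom.ker (tensorLeftMap R I dBC) := hy
  rw [← hT] at this
  obtain ⟨z, rfl⟩ := this
  rw [← AddMonoidHom.comp_apply, ← tensorLeftMap_comp, hzero, tensorLeftMap_zero]
  rfl

end Aux

section Aux2
variable {R : Type} [Ring R]
variable {I : Type} [AddCommGroup I] [Module R I]

lemma tensor_dsum_injective {ι : Type} [DecidableEq ι]
    {β γ : ι → Type} [∀ i, AddCommGroup (β i)] [∀ i, Module Rᵐᵒᵖ (β i)]
    [∀ i, AddCommGroup (γ i)] [∀ i, Module Rᵐᵒᵖ (γ i)]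
    (u : ∀ i, β i →ₗ[Rᵐᵒᵖ] γ i)
    (hu : ∀ i, Function.Injective (tensorLeftMap R I (u i)))
    (f : (⨁ i, β i) →ₗ[Rᵐᵒᵖ] ⨁ i, γ i)
    (hf : ∀ i, (DirectSum.component Rᵐᵒᵖ ι γ i) ∘ₗ f =
      (u i) ∘ₗ (DirectSum.component Rᵐᵒᵖ ι β i)) :
    Function.Injective (tensorLeftMap R I f) := by
  classical
  rw [injective_iff_map_eq_zero]
  intro x hx
  have hπ : ∀ i : ι, tensorLeftMap R I (DirectSum.component Rᵐᵒᵖ ι β i) x = 0 := by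
    intro i
    apply hu i
    have h5 := congrArg (fun φ => φ x) (congrArg (tensorLeftMap R I) (hf i))
    rw [tensorLeftMap_comp, tensorLeftMap_comp] at h5
    simp only [AddMonoidHom.comp_apply] at h5
    rw [hx, map_zero] at h5
    rw [map_zero]
    exact h5.symm
  have hfix : ∃ S : Finset ι, ∀ T : Finset ι, S ⊆ T →
      tensorLeftMap R I (∑ i ∈ T, (DirectSum.lof Rᵐᵒᵖ ι β i) ∘ₗ
        (DirectSum.component Rᵐᵒᵖ ι β i)) x = x := by
    clear hx hπ
    induction x using QuotientAddGroup.induction_on with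
    | H w =>
      induction w using FreeAbelianGroup.induction_on with
      | zero =>
        exact ⟨∅, fun T _ => by
          show tensorLeftMap R I _ (0 : Tensor R (⨁ i, β i) I) =
            (0 : Tensor R (⨁ i, β i) I)
          rw [map_zero]⟩
      | of p =>
        obtain ⟨m, i⟩ := p
        refine ⟨DFinsupp.support m, fun T hT => ?_⟩
        have hEm : (∑ j ∈ T, (DirectSum.lof Rᵐᵒᵖ ι β j) ∘ₗ
            (DirectSum.component Rᵐᵒᵖ ι β j)) m = m := by
          rw [LinearMap.sum_apply]
          rw [← Finset.sum_subset hT (fun j _ hj => by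
            rw [LinearMap.comp_apply]
            have : DirectSum.component Rᵐᵒᵖ ι β j m = 0 :=
              DFinsupp.notMem_support_iff.mp hj
            rw [this, map_zero])]
          have heq : ∀ j ∈ DFinsupp.support m,
              ((DirectSum.lof Rᵐᵒᵖ ι β j) ∘ₗ (DirectSum.component Rᵐᵒᵖ ι β j)) m =
              DirectSum.of β j (m j) := fun j _ => rfl
          rw [Finset.sum_congr rfl heq]
          exact DirectSum.sum_support_of m
        show tensorLeftMap R I _ (QuotientAddGroup.mk (FreeAbelianGroup.of (m, i))) = _
        rw [tensorLeftMap_mk_of, hEm]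
      | neg p hp =>
        obtain ⟨S, hS⟩ := hp
        refine ⟨S, fun T hT => ?_⟩
        have hneg : (QuotientAddGroup.mk (-FreeAbelianGroup.of p) :
            Tensor R (⨁ i, β i) I) = -QuotientAddGroup.mk (FreeAbelianGroup.of p) := rfl
        show tensorLeftMap R I _ (QuotientAddGroup.mk (-FreeAbelianGroup.of p)) =
          QuotientAddGroup.mk (-FreeAbelianGroup.of p)
        rw [hneg, map_neg, hS T hT]
      | add a b ha hb =>
        obtain ⟨Sa, hSa⟩ := ha
        obtain ⟨Sb, hSb⟩ := hb
        refine ⟨Sa ∪ Sb, fun T hT => ?_⟩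
        have hadd : (QuotientAddGroup.mk (a + b) : Tensor R (⨁ i, β i) I) =
            QuotientAddGroup.mk a + QuotientAddGroup.mk b := rfl
        show tensorLeftMap R I _ (QuotientAddGroup.mk (a + b)) =
          QuotientAddGroup.mk (a + b)
        rw [hadd, map_add, hSa T (Finset.union_subset_iff.mp hT).1,
          hSb T (Finset.union_subset_iff.mp hT).2]
  obtain ⟨S, hS⟩ := hfix
  have hxS := hS S (subset_refl S)
  rw [tensorLeftMap_sum] at hxS
  rw [← hxS, AddMonoidHom.finset_sum_apply]
  refine Finset.sum_eq_zero fun i _ => ?_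
  rw [tensorLeftMap_comp, AddMonoidHom.comp_apply, hπ i, map_zero]

end Aux2

set_option maxHeartbeats 1000000 in
set_option synthInstance.maxHeartbeats 400000 in
/-- A projectively coresolved Gorenstein flat module `K` is a direct
summand of a module `M` fitting into an exact sequence `0 → M → P → M → 0` with `P`
projective and `Tor₁(M, I) = 0` for every injective left `R`-module `I` (given the
displayed sequence with `P` projective, the latter is expressed by the equivalent
condition that `f ⊗ I` remains injective). -/
theorem pgf_summand_of_periodic
    {R : Type} [Ring R] (K : Type) [AddCommGroup K] [Module Rᵐᵒᵖ K]
    (hK : IsPGF R K) :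
    ∃ (M P : ModuleCat.{0} Rᵐᵒᵖ) (f : ↥M →ₗ[Rᵐᵒᵖ] ↥P) (g : ↥P →ₗ[Rᵐᵒᵖ] ↥M),
      Module.Projective Rᵐᵒᵖ ↥P ∧ SES R f g ∧
      (∀ (I : Type) [AddCommGroup I] [Module R I], Module.Injective R I →
        Function.Injective (tensorLeftMap R I f)) ∧
      ∃ (i : K →ₗ[Rᵐᵒᵖ] ↥M) (r : ↥M →ₗ[Rᵐᵒᵖ] K), r ∘ₗ i = LinearMap.id := by
  classical
  obtain ⟨P, d, hproj, hd, hTI, ⟨e⟩⟩ := hK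
  set Kn : (n : ℤ) → Submodule Rᵐᵒᵖ (P n) := fun n => LinearMap.ker (d n) with hKn
  -- the modules
  let Mod : Type := ⨁ (n : ℤ), ↥(Kn n)
  let Pod : Type := ⨁ (n : ℤ), ↥(P n)
  -- the maps
  let f : Mod →ₗ[Rᵐᵒᵖ] Pod :=
    DirectSum.toModule Rᵐᵒᵖ ℤ Pod
      (fun n => (DirectSum.lof Rᵐᵒᵖ ℤ (fun n => ↥(P n)) n) ∘ₗ (Kn n).subtype)
  have hc : ∀ (n : ℤ) (p : P n), d n p ∈ Kn (n + 1) := fun n p => by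
    show d n p ∈ LinearMap.ker (d (n + 1))
    rw [← hd n]; exact LinearMap.mem_range_self (d n) p
  let c : ∀ n : ℤ, ↥(P n) →ₗ[Rᵐᵒᵖ] ↥(Kn (n + 1)) :=
    fun n => LinearMap.codRestrict (Kn (n + 1)) (d n) (hc n)
  let g : Pod →ₗ[Rᵐᵒᵖ] Mod :=
    DirectSum.toModule Rᵐᵒᵖ ℤ Mod
      (fun n => (DirectSum.lof Rᵐᵒᵖ ℤ (fun n => ↥(Kn n)) (n + 1)) ∘ₗ c n)
  -- component formulas
  have f_apply : ∀ (x : Mod) (n : ℤ), ((f x) n : P n) = ((x n : ↥(Kn n)) : P n) := by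
    intro x
    induction x using DirectSum.induction_on with
    | zero => intro n; simp
    | of j k =>
      intro n
      rw [← DirectSum.lof_eq_of Rᵐᵒᵖ, DirectSum.toModule_lof]
      rcases eq_or_ne j n with rfl | hne
      · rw [LinearMap.comp_apply, DirectSum.lof_eq_of, DirectSum.lof_eq_of,
          DirectSum.of_eq_same, DirectSum.of_eq_same]
        rfl
      · rw [LinearMap.comp_apply, DirectSum.lof_eq_of, DirectSum.lof_eq_of,
          DirectSum.of_eq_of_ne _ _ _ hne.symm, DirectSum.of_eq_of_ne _ _ _ hne.symm]
        simp
    | add a b ha hb =>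
      intro n
      rw [map_add, DirectSum.add_apply, DirectSum.add_apply, ha n, hb n]
      simp
  have g_apply : ∀ (x : Pod) (n : ℤ), (g x) (n + 1) = c n (x n) := by
    intro x
    induction x using DirectSum.induction_on with
    | zero => intro n; simp
    | of j p =>
      intro n
      rw [← DirectSum.lof_eq_of Rᵐᵒᵖ, DirectSum.toModule_lof]
      rcases eq_or_ne j n with rfl | hne
      · rw [LinearMap.comp_apply, DirectSum.lof_eq_of, DirectSum.lof_eq_of,
          DirectSum.of_eq_same, DirectSum.of_eq_same]
      · have hne' : j + 1 ≠ n + 1 := fun h => hne (by omega)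
        rw [LinearMap.comp_apply, DirectSum.lof_eq_of, DirectSum.lof_eq_of,
          DirectSum.of_eq_of_ne _ _ _ hne'.symm, DirectSum.of_eq_of_ne _ _ _ hne.symm]
        simp
    | add a b ha hb =>
      intro n
      rw [map_add, DirectSum.add_apply, DirectSum.add_apply, ha n, hb n]
      simp
  -- projectivity
  have hPproj : Module.Projective Rᵐᵒᵖ Pod := by
    haveI : ∀ n : ℤ, Module.Projective Rᵐᵒᵖ (P n) := hproj
    exact (inferInstance : Module.Projective Rᵐᵒᵖ (Π₀ n : ℤ, ↥(P n)))
  -- f injective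
  have hfinj : Function.Injective f := by
    intro x y hxy
    refine DFinsupp.ext fun n => Subtype.ext ?_
    exact (f_apply x n).symm.trans ((congrArg (fun z : Pod => z n) hxy).trans (f_apply y n))
  -- g surjective
  have hgsurj : Function.Surjective g := by
    intro y
    induction y using DirectSum.induction_on with
    | zero => exact ⟨0, map_zero g⟩
    | of m k =>
      obtain ⟨n, rfl⟩ : ∃ n : ℤ, m = n + 1 := ⟨m - 1, by ring⟩
      have hk : (k : P (n + 1)) ∈ LinearMap.ker (d (n + 1)) := k.2
      rw [← hd n] at hk
      obtain ⟨p, hp⟩ := hk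
      refine ⟨DirectSum.of (fun n => ↥(P n)) n p, ?_⟩
      rw [← DirectSum.lof_eq_of Rᵐᵒᵖ]
      show DirectSum.toModule Rᵐᵒᵖ ℤ Mod _ _ = _
      rw [DirectSum.toModule_lof, LinearMap.comp_apply, DirectSum.lof_eq_of]
      congr 1
      exact Subtype.ext hp
    | add a b ha hb =>
      obtain ⟨x, hx⟩ := ha
      obtain ⟨y, hy⟩ := hb
      exact ⟨x + y, by rw [map_add, hx, hy]⟩
  -- range f = ker g
  have hker : LinearMap.range f = LinearMap.ker g := by
    apply le_antisymm
    · rintro _ ⟨x, rfl⟩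
      rw [LinearMap.mem_ker]
      have hgf : g ∘ₗ f = 0 := by
        apply DirectSum.linearMap_ext
        intro n
        ext k
        have h1 : f (DirectSum.lof Rᵐᵒᵖ ℤ (fun n => ↥(Kn n)) n k) =
            DirectSum.lof Rᵐᵒᵖ ℤ (fun n => ↥(P n)) n (k : P n) := by
          show DirectSum.toModule Rᵐᵒᵖ ℤ Pod _ _ = _
          rw [DirectSum.toModule_lof]; rfl
        have h2 : g (DirectSum.lof Rᵐᵒᵖ ℤ (fun n => ↥(P n)) n (k : P n)) =
            DirectSum.lof Rᵐᵒᵖ ℤ (fun n => ↥(Kn n)) (n + 1) (c n (k : P n)) := by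
          show DirectSum.toModule Rᵐᵒᵖ ℤ Mod _ _ = _
          rw [DirectSum.toModule_lof]; rfl
        have h3 : c n (k : P n) = 0 := Subtype.ext k.2
        simp only [LinearMap.comp_apply, LinearMap.zero_apply, h1, h2, h3, map_zero]
      exact congrFun (congrArg (fun h : Mod →ₗ[Rᵐᵒᵖ] Mod => h.toFun) hgf) x
    · intro x hx
      rw [LinearMap.mem_ker] at hx
      have hmem : ∀ n : ℤ, x n ∈ Kn n := by
        intro n
        have h1 : c n (x n) = 0 := by
          have h2 := g_apply x n
          rw [hx] at h2
          simpa using h2.symm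
        exact congrArg Subtype.val h1
      refine ⟨DFinsupp.mk x.support (fun n => (⟨x n.1, hmem n.1⟩ : ↥(Kn n.1))), ?_⟩
      refine DFinsupp.ext fun n => ?_
      rw [f_apply]
      rw [DFinsupp.mk_apply]
      split_ifs with h
      · rfl
      · exact (DFinsupp.notMem_support_iff.mp h).symm
  -- tensor injectivity
  have htens : ∀ (I : Type) [_h1 : AddCommGroup I] [_h2 : Module R I], Module.Injective R I →
      Function.Injective (@tensorLeftMap R _ Mod Pod _ _ _ _ I _ _ f) := by
    intro I _ _ hInj
    have hcompInj : ∀ n : ℤ,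
        Function.Injective (tensorLeftMap R I (Kn n).subtype) := by
      intro n
      obtain ⟨m, rfl⟩ : ∃ m : ℤ, n = m + 1 + 1 := ⟨n - 2, by ring⟩
      exact ker_subtype_tensor_injective (d m) (d (m + 1)) (d (m + 1 + 1))
        (hd m) (hd (m + 1)) (hTI I hInj m)
    exact tensor_dsum_injective (fun n => (Kn n).subtype) hcompInj f
      (fun n => LinearMap.ext fun y => f_apply y n)
  -- K is a summand
  have hsummand : ∃ (i : K →ₗ[Rᵐᵒᵖ] Mod) (r : Mod →ₗ[Rᵐᵒᵖ] K), r ∘ₗ i = LinearMap.id := by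
    refine ⟨(DirectSum.lof Rᵐᵒᵖ ℤ (fun n => ↥(Kn n)) 0) ∘ₗ e.toLinearMap,
      (e.symm.toLinearMap) ∘ₗ (DirectSum.component Rᵐᵒᵖ ℤ (fun n => ↥(Kn n)) 0), ?_⟩
    ext k
    simp only [LinearMap.comp_apply, LinearMap.id_apply, LinearEquiv.coe_coe]
    rw [DirectSum.component.lof_self]
    exact e.symm_apply_apply k
  exact ⟨ModuleCat.of Rᵐᵒᵖ Mod, ModuleCat.of Rᵐᵒᵖ Pod, f, g, hPproj,
    ⟨hfinj, hgsurj, hker⟩, htens, hsummand⟩
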